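/- arXiv:2604.23967 — 2 statements merged into one kernel-verified Lean document; each statement's English description precedes it below -/
import Mathlib

section
/- With B = C ∪ ST(Γ₁ ∪ Γ₂) and B₁, B₂ the induced partial algebras, B₁ ≅ B₂ if and only if for all u, t ∈ B, u ∼_{Γ₁} t ⟺ u ∼_{Γ₂} t. -/
namespace AFA

open Classical

/-- A functional signature: operation symbols with arities. Constants are arity-0 symbols. -/
structure Sig where
  Op : Type
  arity : Op → ℕ

/-- Ground terms over a signature. -/
inductive Tm (S : Sig) : Type
  | node (f : S.Op) (args : Fin (S.arity f) → Tm S) : Tm S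

/-- The ground term given by a constant symbol. -/
def constTm (S : Sig) (c : S.Op) (h : S.arity c = 0) : Tm S :=
  Tm.node c (fun i => absurd i.isLt (by omega))

/-- Height of a ground term (constants have height 0). -/
def Tm.height {S : Sig} : Tm S → ℕ
  | Tm.node _ a => Finset.univ.sup fun i => (a i).height + 1

/-- The i-th immediate subterm (child of the root of the syntax tree), if it exists. -/
def Tm.child {S : Sig} : Tm S → ℕ → Option (Tm S)
  | Tm.node f a, i => if h : i < S.arity f then some (a ⟨i, h⟩) else none

/-- A total algebra over the signature `S`. -/
structure Alg (S : Sig) where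
  carrier : Type
  op : (f : S.Op) → (Fin (S.arity f) → carrier) → carrier

/-- Homomorphism of total algebras. -/
structure Hom {S : Sig} (A B : Alg S) where
  toFun : A.carrier → B.carrier
  map : ∀ (f : S.Op) (a : Fin (S.arity f) → A.carrier),
    toFun (A.op f a) = B.op f (fun i => toFun (a i))

/-- Evaluation of a ground term in an algebra. -/
def Tm.eval {S : Sig} (A : Alg S) : Tm S → A.carrier
  | Tm.node f a => A.op f (fun i => (a i).eval A)

/-- An algebra is generated by the constants iff every element is the value of a ground term. -/
def GeneratedAlg {S : Sig} (A : Alg S) : Prop :=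
  ∀ x : A.carrier, ∃ t : Tm S, t.eval A = x

/-- Isomorphism of total algebras. -/
def AlgIso {S : Sig} (A B : Alg S) : Prop :=
  ∃ h : Hom A B, Function.Bijective h.toFun

/-- Derivability in equational logic from a set `Γ` of ground equations:
the smallest congruence containing `Γ`. `Thm Γ p q` means `Γ ⊢ p = q`. -/
inductive Thm {S : Sig} (Γ : Set (Tm S × Tm S)) : Tm S → Tm S → Prop
  | ax {p q : Tm S} : (p, q) ∈ Γ → Thm Γ p q
  | refl (t : Tm S) : Thm Γ t t
  | symm {p q : Tm S} : Thm Γ p q → Thm Γ q p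
  | trans {p q r : Tm S} : Thm Γ p q → Thm Γ q r → Thm Γ p r
  | congr {f : S.Op} {a b : Fin (S.arity f) → Tm S} :
      (∀ i, Thm Γ (a i) (b i)) → Thm Γ (Tm.node f a) (Tm.node f b)

/-- The setoid `∼_Γ` on ground terms. -/
def thmSetoid {S : Sig} (Γ : Set (Tm S × Tm S)) : Setoid (Tm S) :=
  ⟨Thm Γ, ⟨fun t => Thm.refl t, fun h => Thm.symm h, fun h₁ h₂ => Thm.trans h₁ h₂⟩⟩

/-- The quotient algebra `F_Γ = F/∼_Γ`. -/
noncomputable def FGamma {S : Sig} (Γ : Set (Tm S × Tm S)) : Alg S where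
  carrier := Quotient (thmSetoid Γ)
  op f a := Quotient.mk (thmSetoid Γ) (Tm.node f (fun i => (a i).out))

/-- Single-step ground rewriting: replace a subterm which is one side of an
equation of `Γ` by the other side. -/
inductive Step {S : Sig} (Γ : Set (Tm S × Tm S)) : Tm S → Tm S → Prop
  | here {p q : Tm S} : (p, q) ∈ Γ ∨ (q, p) ∈ Γ → Step Γ p q
  | sub {f : S.Op} {a b : Fin (S.arity f) → Tm S} (i : Fin (S.arity f)) :
      Step Γ (a i) (b i) → (∀ j, j ≠ i → a j = b j) → Step Γ (Tm.node f a) (Tm.node f b)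

/-- Subterm relation on ground terms. -/
inductive Subterm {S : Sig} : Tm S → Tm S → Prop
  | refl (t : Tm S) : Subterm t t
  | step {s : Tm S} {f : S.Op} {a : Fin (S.arity f) → Tm S} (i : Fin (S.arity f)) :
      Subterm s (a i) → Subterm s (Tm.node f a)

/-- `p` occurs in `Γ` (is one side of an equation of `Γ`). -/
def SideOf {S : Sig} (Γ : Set (Tm S × Tm S)) (p : Tm S) : Prop :=
  ∃ e ∈ Γ, p = e.1 ∨ p = e.2

/-- `ST Γ`: all subterms of terms occurring in `Γ`. -/
def ST {S : Sig} (Γ : Set (Tm S × Tm S)) : Set (Tm S) :=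
  {t | ∃ e ∈ Γ, Subterm t e.1 ∨ Subterm t e.2}

/-- A term "has a type" if it is `∼_Γ`-equivalent to a term mentioned in `Γ`. -/
def HasType {S : Sig} (Γ : Set (Tm S × Tm S)) (t : Tm S) : Prop :=
  ∃ p, SideOf Γ p ∧ Thm Γ t p

/-- `w` is an immediate subterm of `u`. -/
def ImmSub {S : Sig} (w u : Tm S) : Prop :=
  ∃ (f : S.Op) (a : Fin (S.arity f) → Tm S) (i : Fin (S.arity f)), u = Tm.node f a ∧ a i = w

/-- Edge relation of the quotient graph `R̂_Γ`: there is a directed edge from the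
class of `u` to the class of `w` iff some `Γ`-subterm-occurrence `u'` equivalent to `u`
has an immediate subterm `w'` equivalent to `w`. -/
def EdgeHat {S : Sig} (Γ : Set (Tm S × Tm S)) (u w : Tm S) : Prop :=
  ∃ u' w', u' ∈ ST Γ ∧ w' ∈ ST Γ ∧ Thm Γ u u' ∧ Thm Γ w w' ∧ ImmSub w' u'

/-- A directed cycle of `R̂_Γ` is reachable from (the class of) `t` by a directed path. -/
def CyclicFrom {S : Sig} (Γ : Set (Tm S × Tm S)) (t : Tm S) : Prop :=
  ∃ u, Relation.ReflTransGen (EdgeHat Γ) t u ∧ Relation.TransGen (EdgeHat Γ) u u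

/-- `t` is of cyclic type: `t` is `∼_Γ`-equivalent to a term mentioned in `Γ`
whose type is cyclic. -/
def OfCyclicType {S : Sig} (Γ : Set (Tm S × Tm S)) (t : Tm S) : Prop :=
  ∃ p, SideOf Γ p ∧ Thm Γ t p ∧ CyclicFrom Γ p

/-- The canonical representative map: given a choice function `r` assigning to each
typed term the fixed representative of its type, replace each maximal typed subterm
of `t` by the chosen representative. -/
noncomputable def repMap {S : Sig} (Γ : Set (Tm S × Tm S)) (r : Tm S → Tm S) : Tm S → Tm S
  | Tm.node f a =>
      if HasType Γ (Tm.node f a) then r (Tm.node f a)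
      else Tm.node f fun i => repMap Γ r (a i)

/-- A partial algebra over `S`. -/
structure PAlg (S : Sig) where
  carrier : Type
  pop : (f : S.Op) → (Fin (S.arity f) → carrier) → Option carrier

/-- An embedding exhibiting the partial algebra `B` as a substructure of the
total algebra `A`. -/
structure PEmb {S : Sig} (B : PAlg S) (A : Alg S) where
  toFun : B.carrier → A.carrier
  inj : Function.Injective toFun
  map : ∀ (f : S.Op) (b : Fin (S.arity f) → B.carrier) (c : B.carrier),
    B.pop f b = some c → A.op f (fun i => toFun (b i)) = toFun c

/-- `A` is free over the partial algebra `B` (via the substructure embedding `e`):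
every (constant-generated) algebra containing `B` as a substructure is a homomorphic
image of `A` via a homomorphism fixing `B` pointwise. -/
def IsFreeOver {S : Sig} (A : Alg S) (B : PAlg S) (e : PEmb B A) : Prop :=
  ∀ (C : Alg S), GeneratedAlg C → ∀ e' : PEmb B C,
    ∃ h : Hom A C, Function.Surjective h.toFun ∧ ∀ b, h.toFun (e.toFun b) = e'.toFun b

/-- Elements of a partial algebra generated from constants via the defined operations. -/
inductive PGen {S : Sig} (B : PAlg S) : B.carrier → Prop
  | op {f : S.Op} {b : Fin (S.arity f) → B.carrier} {c : B.carrier} :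
      (∀ i, PGen B (b i)) → B.pop f b = some c → PGen B c

/-- A partial algebra is generated by the constants. -/
def PGenerated {S : Sig} (B : PAlg S) : Prop := ∀ x, PGen B x

/-- Raw `B`-terms: terms built over elements of the partial algebra `B`. -/
inductive BTm {S : Sig} (B : PAlg S) : Type
  | base (b : B.carrier) : BTm B
  | app (f : S.Op) (args : Fin (S.arity f) → BTm B) : BTm B

/-- Normal `B`-terms: an application node is allowed only when it cannot be
evaluated in `B`. -/
inductive Normal {S : Sig} {B : PAlg S} : BTm B → Prop
  | base (b : B.carrier) : Normal (BTm.base b)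
  | app {f : S.Op} {args : Fin (S.arity f) → BTm B} :
      (∀ i, Normal (args i)) →
      ¬(∃ (b : Fin (S.arity f) → B.carrier) (c : B.carrier),
          (∀ i, args i = BTm.base (b i)) ∧ B.pop f b = some c) →
      Normal (BTm.app f args)

/-- The free total extension `F(B)` of the partial algebra `B`: its elements are
the normal `B`-terms; an operation evaluates in `B` whenever possible, and forms
a formal term otherwise. -/
noncomputable def FB {S : Sig} (B : PAlg S) : Alg S where
  carrier := {t : BTm B // Normal t}
  op f args :=
    if h : ∃ (b : Fin (S.arity f) → B.carrier) (c : B.carrier),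
        (∀ i, (args i).1 = BTm.base (b i)) ∧ B.pop f b = some c
    then ⟨BTm.base h.choose_spec.choose, Normal.base _⟩
    else ⟨BTm.app f (fun i => (args i).1), Normal.app (fun i => (args i).2) h⟩

/-- The canonical inclusion of `B` into `F(B)`. -/
def embB {S : Sig} (B : PAlg S) (b : B.carrier) : (FB B).carrier :=
  ⟨BTm.base b, Normal.base b⟩

/-- Terms with variables. -/
inductive TmV (S : Sig) : Type
  | var (n : ℕ) : TmV S
  | node (f : S.Op) (args : Fin (S.arity f) → TmV S) : TmV S

/-- Ground substitution into a term with variables. -/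
def TmV.substG {S : Sig} (ρ : ℕ → Tm S) : TmV S → Tm S
  | TmV.var n => ρ n
  | TmV.node f a => Tm.node f (fun i => (a i).substG ρ)

/-- Evaluation of a term with variables under an assignment. -/
def TmV.evalV {S : Sig} (A : Alg S) (ρ : ℕ → A.carrier) : TmV S → A.carrier
  | TmV.var n => ρ n
  | TmV.node f a => A.op f (fun i => (a i).evalV A ρ)

/-- All ground instances of a set of (possibly non-ground) equations. -/
def GroundInstances {S : Sig} (Γ : Set (TmV S × TmV S)) : Set (Tm S × Tm S) :=
  {pq | ∃ e ∈ Γ, ∃ ρ : ℕ → Tm S, pq.1 = e.1.substG ρ ∧ pq.2 = e.2.substG ρ}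

/-- `A ⊨ Γ` for a set of (possibly non-ground) equations. -/
def SatV {S : Sig} (A : Alg S) (Γ : Set (TmV S × TmV S)) : Prop :=
  ∀ e ∈ Γ, ∀ ρ : ℕ → A.carrier, TmV.evalV A ρ e.1 = TmV.evalV A ρ e.2

/-- The finite partial algebra of `∼_Γ`-classes containing a term of height `≤ N`. -/
noncomputable def heightPAlg {S : Sig} (Γ : Set (Tm S × Tm S)) (N : ℕ) : PAlg S where
  carrier := {x : Quotient (thmSetoid Γ) //
    ∃ t : Tm S, t.height ≤ N ∧ Quotient.mk (thmSetoid Γ) t = x}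
  pop f b :=
    if h : ∃ t : Tm S, t.height ≤ N ∧
        Quotient.mk (thmSetoid Γ) t =
          Quotient.mk (thmSetoid Γ) (Tm.node f (fun i => (b i).1.out))
    then some ⟨Quotient.mk (thmSetoid Γ) (Tm.node f (fun i => (b i).1.out)), h⟩
    else none

/-- The set `B = C ∪ ST(Γ₁ ∪ Γ₂)`. -/
def BSet {S : Sig} (Γ₁ Γ₂ : Set (Tm S × Tm S)) : Set (Tm S) :=
  {t | (∃ (c : S.Op) (h : S.arity c = 0), t = constTm S c h) ∨ t ∈ ST (Γ₁ ∪ Γ₂)}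

/-- The partial algebra induced by `Γ` on the `∼_Γ`-classes of terms of `Bs`:
`f` applied to classes is defined iff the class of the resulting term again
contains a term of `Bs`. -/
noncomputable def BAlg {S : Sig} (Γ : Set (Tm S × Tm S)) (Bs : Set (Tm S)) : PAlg S where
  carrier := Quotient (Setoid.comap (Subtype.val : Bs → Tm S) (thmSetoid Γ))
  pop f b :=
    if h : ∃ u : Bs, Thm Γ u.1 (Tm.node f (fun i => ((b i).out).1))
    then some (Quotient.mk (Setoid.comap (Subtype.val : Bs → Tm S) (thmSetoid Γ)) h.choose)
    else none

/-- The class of `t ∈ Bs` as an element of `BAlg Γ Bs`. -/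
noncomputable def BAlgMk {S : Sig} (Γ : Set (Tm S × Tm S)) (Bs : Set (Tm S))
    (t : Tm S) (ht : t ∈ Bs) : (BAlg Γ Bs).carrier :=
  Quotient.mk (Setoid.comap (Subtype.val : Bs → Tm S) (thmSetoid Γ)) ⟨t, ht⟩

/-- Isomorphism of partial algebras: a bijection preserving definedness and
values of the partial operations in both directions. -/
def PIso {S : Sig} (B₁ B₂ : PAlg S) : Prop :=
  ∃ e : B₁.carrier ≃ B₂.carrier,
    ∀ (f : S.Op) (b : Fin (S.arity f) → B₁.carrier),
      Option.map e (B₁.pop f b) = B₂.pop f (fun i => e (b i))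

/-- The algebra structure on `∼_Γ`-classes of `ST(Γ)`, defined via the closure
hypothesis `hf`. -/
noncomputable def STAlg {S : Sig} (Γ : Set (Tm S × Tm S))
    (hf : ∀ (f : S.Op) (a : Fin (S.arity f) → Tm S), (∀ i, a i ∈ ST Γ) →
      ∃ u ∈ ST Γ, Thm Γ (Tm.node f a) u) : Alg S where
  carrier := Quotient (Setoid.comap (Subtype.val : ST Γ → Tm S) (thmSetoid Γ))
  op f a :=
    let h := hf f (fun i => ((a i).out).1) (fun i => ((a i).out).2)
    Quotient.mk (Setoid.comap (Subtype.val : ST Γ → Tm S) (thmSetoid Γ))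
      ⟨h.choose, h.choose_spec.1⟩

/-- The map `φ : F → ST(Γ)` defined inductively by choosing, at each application,
a `∼_Γ`-equivalent member of `ST(Γ)`. -/
noncomputable def phiST {S : Sig} (Γ : Set (Tm S × Tm S))
    (hf : ∀ (f : S.Op) (a : Fin (S.arity f) → Tm S), (∀ i, a i ∈ ST Γ) →
      ∃ u ∈ ST Γ, Thm Γ (Tm.node f a) u) : Tm S → {u : Tm S // u ∈ ST Γ}
  | Tm.node f a =>
      let ih := fun i => phiST Γ hf (a i)
      let h := hf f (fun i => (ih i).1) (fun i => (ih i).2)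
      ⟨h.choose, h.choose_spec.1⟩

/-- The tester predicate `Is_f` on `F(B)`: holds of `a` iff `a ∉ B` and `a` is a
formal term with head symbol `f`. -/
def IsTester {S : Sig} {B : PAlg S} (f : S.Op) (a : (FB B).carrier) : Prop :=
  ∃ args : Fin (S.arity f) → BTm B, a.1 = BTm.app f args


section Stmt15Aux

variable {S : Sig}

lemma subterm_trans {a b c : Tm S} (h₁ : Subterm a b) (h₂ : Subterm b c) : Subterm a c := by
  induction h₂ with
  | refl => exact h₁
  | step i _ ih => exact Subterm.step i ih

lemma ST_children {Γ : Set (Tm S × Tm S)} {f : S.Op} {a : Fin (S.arity f) → Tm S}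
    (h : Tm.node f a ∈ ST Γ) (i : Fin (S.arity f)) : a i ∈ ST Γ := by
  obtain ⟨e, he, hc⟩ := h
  have hsub : Subterm (a i) (Tm.node f a) := Subterm.step i (Subterm.refl _)
  cases hc with
  | inl h' => exact ⟨e, he, Or.inl (subterm_trans hsub h')⟩
  | inr h' => exact ⟨e, he, Or.inr (subterm_trans hsub h')⟩

lemma BSet_children {Γ₁ Γ₂ : Set (Tm S × Tm S)} {f : S.Op} {a : Fin (S.arity f) → Tm S}
    (h : Tm.node f a ∈ BSet Γ₁ Γ₂) (i : Fin (S.arity f)) : a i ∈ BSet Γ₁ Γ₂ := by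
  cases h with
  | inl h' =>
    obtain ⟨c, hc, heq⟩ := h'
    have hf : f = c := by
      unfold constTm at heq
      injection heq
    have : S.arity f = 0 := hf ▸ hc
    exact absurd i.isLt (by omega)
  | inr h' => exact Or.inr (ST_children h' i)

lemma side_mem_BSet_left {Γ₁ Γ₂ : Set (Tm S × Tm S)} {p : Tm S}
    (h : SideOf Γ₁ p) : p ∈ BSet Γ₁ Γ₂ := by
  obtain ⟨e, he, hc⟩ := h
  refine Or.inr ⟨e, Or.inl he, ?_⟩
  cases hc with
  | inl h' => exact Or.inl (h' ▸ Subterm.refl p)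
  | inr h' => exact Or.inr (h' ▸ Subterm.refl p)

lemma side_mem_BSet_right {Γ₁ Γ₂ : Set (Tm S × Tm S)} {p : Tm S}
    (h : SideOf Γ₂ p) : p ∈ BSet Γ₁ Γ₂ := by
  obtain ⟨e, he, hc⟩ := h
  refine Or.inr ⟨e, Or.inr he, ?_⟩
  cases hc with
  | inl h' => exact Or.inl (h' ▸ Subterm.refl p)
  | inr h' => exact Or.inr (h' ▸ Subterm.refl p)

/-- Structural analysis of derivations whose endpoint is an application. -/
lemma lemA {Γ : Set (Tm S × Tm S)} {s t : Tm S} (h : Thm Γ s t) :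
    (∀ (f : S.Op) (w : Fin (S.arity f) → Tm S), t = Tm.node f w →
      ∃ v, Thm Γ s (Tm.node f v) ∧ (∀ i, Thm Γ (v i) (w i)) ∧
        (Tm.node f v = s ∨ SideOf Γ (Tm.node f v))) ∧
    (∀ (f : S.Op) (w : Fin (S.arity f) → Tm S), s = Tm.node f w →
      ∃ v, Thm Γ t (Tm.node f v) ∧ (∀ i, Thm Γ (v i) (w i)) ∧
        (Tm.node f v = t ∨ SideOf Γ (Tm.node f v))) := by
  induction h with
  | @ax p q hpq =>
    constructor
    · intro f w hw
      exact ⟨w, by rw [← hw]; exact Thm.ax hpq, fun i => Thm.refl _,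
        Or.inr ⟨(p, q), hpq, Or.inr hw.symm⟩⟩
    · intro f w hw
      exact ⟨w, by rw [← hw]; exact Thm.symm (Thm.ax hpq), fun i => Thm.refl _,
        Or.inr ⟨(p, q), hpq, Or.inl hw.symm⟩⟩
  | refl t =>
    constructor <;>
    · intro f w hw
      exact ⟨w, by rw [← hw]; exact Thm.refl t, fun i => Thm.refl _, Or.inl hw.symm⟩
  | symm h ih => exact ⟨ih.2, ih.1⟩
  | trans h₁ h₂ ih₁ ih₂ =>
    constructor
    · intro f w hw
      obtain ⟨v, hqv, hvw, hcase⟩ := ih₂.1 f w hw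
      cases hcase with
      | inl heq =>
        obtain ⟨v', hpv', hv'v, hcase'⟩ := ih₁.1 f v heq.symm
        exact ⟨v', hpv', fun i => (hv'v i).trans (hvw i), hcase'⟩
      | inr hside => exact ⟨v, h₁.trans hqv, hvw, Or.inr hside⟩
    · intro f w hw
      obtain ⟨v, hqv, hvw, hcase⟩ := ih₁.2 f w hw
      cases hcase with
      | inl heq =>
        obtain ⟨v', hrv', hv'v, hcase'⟩ := ih₂.2 f v heq.symm
        exact ⟨v', hrv', fun i => (hv'v i).trans (hvw i), hcase'⟩
      | inr hside => exact ⟨v, (Thm.symm h₂).trans hqv, hvw, Or.inr hside⟩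
  | @congr f a b hab ih =>
    constructor
    · intro g w hw
      obtain ⟨hf, hb⟩ : f = g ∧ HEq b w := by injection hw with hf hb; exact ⟨hf, hb⟩
      subst hf
      have hb' : b = w := eq_of_heq hb
      subst hb'
      exact ⟨a, Thm.refl _, hab, Or.inl rfl⟩
    · intro g w hw
      obtain ⟨hf, ha⟩ : f = g ∧ HEq a w := by injection hw with hf ha; exact ⟨hf, ha⟩
      subst hf
      have ha' : a = w := eq_of_heq ha
      subst ha'
      exact ⟨b, Thm.refl _, fun i => Thm.symm (hab i), Or.inl rfl⟩

/-- Key transfer lemma: a derivable equation between a `B`-term and an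
application of `B`-terms transfers from `Γ` to `Γ'` provided the two
equivalences agree on `B`. -/
lemma transferKey {Γ Γ' Γ₁ Γ₂ : Set (Tm S × Tm S)}
    (hside : ∀ p, SideOf Γ p → p ∈ BSet Γ₁ Γ₂)
    (hyp : ∀ u ∈ BSet Γ₁ Γ₂, ∀ t ∈ BSet Γ₁ Γ₂, Thm Γ u t → Thm Γ' u t)
    {u : Tm S} {f : S.Op} {w : Fin (S.arity f) → Tm S}
    (hu : u ∈ BSet Γ₁ Γ₂) (hw : ∀ i, w i ∈ BSet Γ₁ Γ₂)
    (h : Thm Γ u (Tm.node f w)) : Thm Γ' u (Tm.node f w) := by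
  obtain ⟨v, huv, hvw, hcase⟩ := (lemA h).1 f w rfl
  have hv : Tm.node f v ∈ BSet Γ₁ Γ₂ := by
    cases hcase with
    | inl h' => rw [h']; exact hu
    | inr h' => exact hside _ h'
  have hvB : ∀ i, v i ∈ BSet Γ₁ Γ₂ := fun i => BSet_children hv i
  exact (hyp u hu _ hv huv).trans
    (Thm.congr fun i => hyp _ (hvB i) _ (hw i) (hvw i))

lemma BAlg_pop_eq {Γ : Set (Tm S × Tm S)} {Bs : Set (Tm S)} (f : S.Op)
    (b : Fin (S.arity f) → (BAlg Γ Bs).carrier) {t : Tm S} (ht : t ∈ Bs)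
    (h : Thm Γ t (Tm.node f (fun i => ((b i).out).1))) :
    (BAlg Γ Bs).pop f b = some (BAlgMk Γ Bs t ht) := by
  have hex : ∃ u : Bs, Thm Γ u.1 (Tm.node f (fun i => ((b i).out).1)) := ⟨⟨t, ht⟩, h⟩
  show (if h : ∃ u : Bs, Thm Γ u.1 (Tm.node f (fun i => ((b i).out).1))
      then some (Quotient.mk (Setoid.comap (Subtype.val : Bs → Tm S) (thmSetoid Γ)) h.choose)
      else none) = some (BAlgMk Γ Bs t ht)
  rw [dif_pos hex]
  exact congrArg some (Quotient.sound (hex.choose_spec.trans h.symm))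

lemma BAlg_pop_none {Γ : Set (Tm S × Tm S)} {Bs : Set (Tm S)} (f : S.Op)
    (b : Fin (S.arity f) → (BAlg Γ Bs).carrier)
    (h : ¬∃ u : Bs, Thm Γ u.1 (Tm.node f (fun i => ((b i).out).1))) :
    (BAlg Γ Bs).pop f b = none := by
  show (if h : ∃ u : Bs, Thm Γ u.1 (Tm.node f (fun i => ((b i).out).1))
      then some (Quotient.mk (Setoid.comap (Subtype.val : Bs → Tm S) (thmSetoid Γ)) h.choose)
      else none) = none
  rw [dif_neg h]

end Stmt15Aux

/-- With `B = C ∪ ST(Γ₁ ∪ Γ₂)` and `B₁`, `B₂` the induced partial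
algebras, `B₁ ≅ B₂` iff for all `u, t ∈ B`, `u ∼_{Γ₁} t ⟺ u ∼_{Γ₂} t`. -/
theorem stmt15 (S : Sig) [Fintype S.Op] (Γ₁ Γ₂ : Set (Tm S × Tm S))
    (h₁ : Γ₁.Finite) (h₂ : Γ₂.Finite) :
    PIso (BAlg Γ₁ (BSet Γ₁ Γ₂)) (BAlg Γ₂ (BSet Γ₁ Γ₂)) ↔
      ∀ u ∈ BSet Γ₁ Γ₂, ∀ t ∈ BSet Γ₁ Γ₂, (Thm Γ₁ u t ↔ Thm Γ₂ u t) := by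
  constructor
  · rintro ⟨e, he⟩
    -- the isomorphism is the identity on classes of `B`-terms
    have key : ∀ (t : Tm S) (ht : t ∈ BSet Γ₁ Γ₂),
        e (BAlgMk Γ₁ (BSet Γ₁ Γ₂) t ht) = BAlgMk Γ₂ (BSet Γ₁ Γ₂) t ht := by
      intro t
      induction t with
      | node f a ih =>
        intro ht
        have ha : ∀ i, a i ∈ BSet Γ₁ Γ₂ := fun i => BSet_children ht i
        let b : Fin (S.arity f) → (BAlg Γ₁ (BSet Γ₁ Γ₂)).carrier :=
          fun i => BAlgMk Γ₁ (BSet Γ₁ Γ₂) (a i) (ha i)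
        have hout1 : ∀ i, Thm Γ₁ ((b i).out).1 (a i) :=
          fun i => Quotient.exact ((b i).out_eq)
        have h1 : (BAlg Γ₁ (BSet Γ₁ Γ₂)).pop f b
            = some (BAlgMk Γ₁ (BSet Γ₁ Γ₂) (Tm.node f a) ht) :=
          BAlg_pop_eq f b ht (Thm.congr fun i => Thm.symm (hout1 i))
        have hout2 : ∀ i, Thm Γ₂ ((e (b i)).out).1 (a i) :=
          fun i => Quotient.exact ((Quotient.out_eq (e (b i))).trans (ih i (ha i)))
        have h3 : (BAlg Γ₂ (BSet Γ₁ Γ₂)).pop f (fun i => e (b i))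
            = some (BAlgMk Γ₂ (BSet Γ₁ Γ₂) (Tm.node f a) ht) :=
          BAlg_pop_eq f (fun i => e (b i)) ht (Thm.congr fun i => Thm.symm (hout2 i))
        have h4 : some (e (BAlgMk Γ₁ (BSet Γ₁ Γ₂) (Tm.node f a) ht))
            = some (BAlgMk Γ₂ (BSet Γ₁ Γ₂) (Tm.node f a) ht) :=
          ((congrArg (Option.map e) h1).symm.trans (he f b)).trans h3
        exact Option.some.inj h4
    intro u hu t ht
    constructor
    · intro h
      have h1 : BAlgMk Γ₂ (BSet Γ₁ Γ₂) u hu = BAlgMk Γ₂ (BSet Γ₁ Γ₂) t ht := by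
        rw [← key u hu, ← key t ht]
        exact congrArg e (Quotient.sound h)
      exact Quotient.exact h1
    · intro h
      have h2 : e (BAlgMk Γ₁ (BSet Γ₁ Γ₂) u hu) = e (BAlgMk Γ₁ (BSet Γ₁ Γ₂) t ht) := by
        rw [key u hu, key t ht]
        exact Quotient.sound h
      exact Quotient.exact (e.injective h2)
  · intro hyp
    have hyp12 : ∀ u ∈ BSet Γ₁ Γ₂, ∀ t ∈ BSet Γ₁ Γ₂, Thm Γ₁ u t → Thm Γ₂ u t :=
      fun u hu t ht h => (hyp u hu t ht).mp h
    have hyp21 : ∀ u ∈ BSet Γ₁ Γ₂, ∀ t ∈ BSet Γ₁ Γ₂, Thm Γ₂ u t → Thm Γ₁ u t :=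
      fun u hu t ht h => (hyp u hu t ht).mpr h
    let e12 : (BAlg Γ₁ (BSet Γ₁ Γ₂)).carrier → (BAlg Γ₂ (BSet Γ₁ Γ₂)).carrier :=
      Quotient.lift
        (fun x : (BSet Γ₁ Γ₂) =>
          Quotient.mk (Setoid.comap (Subtype.val : (BSet Γ₁ Γ₂) → Tm S) (thmSetoid Γ₂)) x)
        (fun x y h => Quotient.sound (hyp12 x.1 x.2 y.1 y.2 h))
    let e21 : (BAlg Γ₂ (BSet Γ₁ Γ₂)).carrier → (BAlg Γ₁ (BSet Γ₁ Γ₂)).carrier :=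
      Quotient.lift
        (fun x : (BSet Γ₁ Γ₂) =>
          Quotient.mk (Setoid.comap (Subtype.val : (BSet Γ₁ Γ₂) → Tm S) (thmSetoid Γ₁)) x)
        (fun x y h => Quotient.sound (hyp21 x.1 x.2 y.1 y.2 h))
    refine ⟨⟨e12, e21, ?_, ?_⟩, ?_⟩
    · intro q; induction q using Quotient.ind; rfl
    · intro q; induction q using Quotient.ind; rfl
    intro f b
    have he12 : ∀ q : (BAlg Γ₁ (BSet Γ₁ Γ₂)).carrier,
        e12 q = Quotient.mk (Setoid.comap (Subtype.val : (BSet Γ₁ Γ₂) → Tm S) (thmSetoid Γ₂))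
          q.out := by
      intro q
      conv_lhs => rw [← Quotient.out_eq q]
      rfl
    have hww' : ∀ i, Thm Γ₂ ((b i).out).1 ((e12 (b i)).out).1 := by
      intro i
      exact Thm.symm (Quotient.exact ((Quotient.out_eq (e12 (b i))).trans (he12 (b i))))
    by_cases hC : ∃ u : (BSet Γ₁ Γ₂), Thm Γ₁ u.1 (Tm.node f (fun i => ((b i).out).1))
    · obtain ⟨u, hu⟩ := hC
      have hwB : ∀ i, ((b i).out).1 ∈ BSet Γ₁ Γ₂ := fun i => ((b i).out).2
      have hw'B : ∀ i, ((e12 (b i)).out).1 ∈ BSet Γ₁ Γ₂ := fun i => ((e12 (b i)).out).2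
      have hw2 : Thm Γ₂ u.1 (Tm.node f (fun i => ((b i).out).1)) :=
        transferKey (fun p hp => side_mem_BSet_left hp) hyp12 u.2 hwB hu
      have hC₂ : Thm Γ₂ u.1 (Tm.node f (fun i => ((e12 (b i)).out).1)) :=
        hw2.trans (Thm.congr fun i => hww' i)
      simp only [Equiv.coe_fn_mk]
      rw [BAlg_pop_eq f b u.2 hu, BAlg_pop_eq f (fun i => e12 (b i)) u.2 hC₂]
      rfl
    · have hC₂ : ¬∃ u : (BSet Γ₁ Γ₂),
          Thm Γ₂ u.1 (Tm.node f (fun i => ((e12 (b i)).out).1)) := by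
        rintro ⟨u, hu⟩
        apply hC
        have hwB : ∀ i, ((b i).out).1 ∈ BSet Γ₁ Γ₂ := fun i => ((b i).out).2
        have hw'B : ∀ i, ((e12 (b i)).out).1 ∈ BSet Γ₁ Γ₂ := fun i => ((e12 (b i)).out).2
        have h1 : Thm Γ₁ u.1 (Tm.node f (fun i => ((e12 (b i)).out).1)) :=
          transferKey (fun p hp => side_mem_BSet_right hp) hyp21 u.2 hw'B hu
        have h2 : Thm Γ₁ (Tm.node f (fun i => ((e12 (b i)).out).1))
            (Tm.node f (fun i => ((b i).out).1)) :=
          Thm.congr fun i => hyp21 _ (hw'B i) _ (hwB i) (Thm.symm (hww' i))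
        exact ⟨u, h1.trans h2⟩
      simp only [Equiv.coe_fn_mk]
      rw [BAlg_pop_none f b hC, BAlg_pop_none f (fun i => e12 (b i)) hC₂]
      rfl

end AFA
end

section
/- Let Σ be a finite signature consisting of a single unary function symbol and finitely many constants. Then every algebra over Σ generated by its constants is an initial algebra, i.e., is isomorphic to F_Γ for some finite set Γ of (possibly non-ground) equations. -/
namespace AFA

open Classical

/-! ### Auxiliary material for stmt19 -/

section Stmt19Aux

variable {S : Sig}

/-- Iteration of the unary symbol `f1`. -/
def iterF (f1 : S.Op) (t : Tm S) : ℕ → Tm S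
  | 0 => t
  | n+1 => Tm.node f1 (fun _ => iterF f1 t n)

lemma iterF_succ (f1 : S.Op) (t : Tm S) (n : ℕ) :
    iterF f1 t (n+1) = Tm.node f1 (fun _ => iterF f1 t n) := rfl

lemma iterF_add (f1 : S.Op) (t : Tm S) (n r : ℕ) :
    iterF f1 t (n + r) = iterF f1 (iterF f1 t n) r := by
  induction r with
  | zero => rfl
  | succ r ih => rw [show n + (r+1) = (n+r)+1 by omega, iterF_succ, iterF_succ, ih]

/-- The term `f1^n(c)`. -/
def TT (f1 : S.Op) (c : {c : S.Op // S.arity c = 0}) (n : ℕ) : Tm S :=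
  iterF f1 (constTm S c.1 c.2) n

lemma TT_add (f1 : S.Op) (c : {c : S.Op // S.arity c = 0}) (n r : ℕ) :
    TT f1 c (n + r) = iterF f1 (TT f1 c n) r := iterF_add _ _ _ _

lemma eval_node (A : Alg S) (f : S.Op) (a : Fin (S.arity f) → Tm S) :
    Tm.eval A (Tm.node f a) = A.op f (fun i => (a i).eval A) := rfl

/-- Every ground term over a 0/1-ary signature is `f1^n(c)`. -/
lemma encodeTm (h01 : ∀ f : S.Op, S.arity f = 0 ∨ S.arity f = 1)
    (f1 : S.Op) (huniq : ∀ g : S.Op, S.arity g = 1 → g = f1) (t : Tm S) :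
    ∃ (n : ℕ) (c : S.Op) (h : S.arity c = 0), t = iterF f1 (constTm S c h) n := by
  induction t with
  | node g a ih =>
    rcases h01 g with h | h
    · refine ⟨0, g, h, ?_⟩
      show Tm.node g a = constTm S g h
      unfold constTm
      exact congrArg (Tm.node g) (funext fun i => absurd i.isLt (by omega))
    · cases huniq g h
      have i0 : Fin (S.arity f1) := ⟨0, by omega⟩
      obtain ⟨n, c, hc, heq⟩ := ih i0
      refine ⟨n+1, c, hc, ?_⟩
      rw [iterF_succ, ← heq]
      exact congrArg (Tm.node f1) (funext fun i => congrArg a (Fin.ext (by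
        have := i.isLt; have := i0.isLt; omega)))

variable (A : Alg S) (f1 : S.Op)

/-- Value of `f1^n(c)` in `A`. -/
def EE (c : {c : S.Op // S.arity c = 0}) (n : ℕ) : A.carrier :=
  Tm.eval A (TT f1 c n)

lemma EE_succ (c : {c : S.Op // S.arity c = 0}) (n : ℕ) :
    EE A f1 c (n+1) = A.op f1 (fun _ => EE A f1 c n) := rfl

lemma shiftE (c d : {c : S.Op // S.arity c = 0}) (a b : ℕ)
    (h : EE A f1 c a = EE A f1 d b) (s : ℕ) :
    EE A f1 c (a + s) = EE A f1 d (b + s) := by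
  induction s with
  | zero => exact h
  | succ s ih =>
    rw [show a + (s+1) = (a+s)+1 by omega, show b + (s+1) = (b+s)+1 by omega,
      EE_succ, EE_succ, ih]

/-- `c` has eventually periodic orbit in `A`. -/
def PP (c : {c : S.Op // S.arity c = 0}) : Prop :=
  ∃ m p, 0 < p ∧ EE A f1 c (m + p) = EE A f1 c m

noncomputable def mcD (c : {c : S.Op // S.arity c = 0}) : ℕ :=
  if h : PP A f1 c then h.choose else 0

noncomputable def pcD (c : {c : S.Op // S.arity c = 0}) : ℕ :=
  if h : PP A f1 c then h.choose_spec.choose else 1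

lemma perD (c : {c : S.Op // S.arity c = 0}) (h : PP A f1 c) :
    0 < pcD A f1 c ∧ EE A f1 c (mcD A f1 c + pcD A f1 c) = EE A f1 c (mcD A f1 c) := by
  unfold mcD pcD
  rw [dif_pos h, dif_pos h]
  exact ⟨h.choose_spec.choose_spec.1, h.choose_spec.choose_spec.2⟩

/-- The orbits of `c` and `d` meet in `A`. -/
def RelD (c d : {c : S.Op // S.arity c = 0}) : Prop :=
  ∃ a b, EE A f1 c a = EE A f1 d b

noncomputable def acdD (c d : {c : S.Op // S.arity c = 0}) : ℕ :=
  if h : RelD A f1 c d then Nat.find h else 0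

noncomputable def bcdD (c d : {c : S.Op // S.arity c = 0}) : ℕ :=
  if h : RelD A f1 c d then (Nat.find_spec h).choose else 0

lemma abcd_spec (c d : {c : S.Op // S.arity c = 0}) (h : RelD A f1 c d) :
    EE A f1 c (acdD A f1 c d) = EE A f1 d (bcdD A f1 c d) := by
  unfold acdD bcdD
  rw [dif_pos h, dif_pos h]
  exact (Nat.find_spec h).choose_spec

lemma acd_min (c d : {c : S.Op // S.arity c = 0}) (h : RelD A f1 c d)
    (a : ℕ) (ha : ∃ b, EE A f1 c a = EE A f1 d b) : acdD A f1 c d ≤ a := by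
  unfold acdD
  rw [dif_pos h]
  exact Nat.find_le ha

lemma crossP (c d : {c : S.Op // S.arity c = 0}) (a b : ℕ)
    (h : EE A f1 c a = EE A f1 d b) (hc : PP A f1 c) : PP A f1 d := by
  obtain ⟨m, p, hp, hper⟩ := hc
  have h1 : EE A f1 c (a + m) = EE A f1 d (b + m) := shiftE A f1 c d a b h m
  have h2 : EE A f1 c (a + (m + p)) = EE A f1 d (b + (m + p)) := shiftE A f1 c d a b h (m + p)
  have h3 : EE A f1 c (m + p + a) = EE A f1 c (m + a) := shiftE A f1 c c (m+p) m hper a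
  refine ⟨b + m, p, hp, ?_⟩
  rw [show b + m + p = b + (m + p) by omega, ← h2,
    show a + (m + p) = m + p + a by omega, h3, show m + a = a + m by omega, h1]

lemma diagD (c d : {c : S.Op // S.arity c = 0}) (a b a' b' : ℕ)
    (hc : ¬ PP A f1 c) (h : EE A f1 c a = EE A f1 d b)
    (h' : EE A f1 c a' = EE A f1 d b') : a + b' = a' + b := by
  by_contra hne
  have h1 : EE A f1 c (a + b') = EE A f1 d (b + b') := shiftE A f1 c d a b h b'
  have h2 : EE A f1 c (a' + b) = EE A f1 d (b' + b) := shiftE A f1 c d a' b' h' b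
  have h3 : EE A f1 c (a + b') = EE A f1 c (a' + b) := by
    rw [h1, h2, Nat.add_comm b b']
  apply hc
  rcases Nat.lt_or_ge (a + b') (a' + b) with hlt | hge
  · exact ⟨a + b', (a' + b) - (a + b'), by omega,
      by rw [show a + b' + ((a' + b) - (a + b')) = a' + b by omega]; exact h3.symm⟩
  · have hlt : a' + b < a + b' := by omega
    exact ⟨a' + b, (a + b') - (a' + b), by omega,
      by rw [show a' + b + ((a + b') - (a' + b)) = a + b' by omega]; exact h3⟩

/-- The finite axiom set. -/
def Gam (N : ℕ) : Set (Tm S × Tm S) :=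
  ({e | ∃ c, PP A f1 c ∧
      e = (TT f1 c (mcD A f1 c + pcD A f1 c), TT f1 c (mcD A f1 c))} ∪
   {e | ∃ c d, ¬ PP A f1 c ∧ ¬ PP A f1 d ∧ RelD A f1 c d ∧
      e = (TT f1 c (acdD A f1 c d), TT f1 d (bcdD A f1 c d))}) ∪
  {e | ∃ c d i j, i ≤ N ∧ j ≤ N ∧ EE A f1 c i = EE A f1 d j ∧
      e = (TT f1 c i, TT f1 d j)}

lemma gam_finite [Fintype S.Op] (N : ℕ) : (Gam A f1 N).Finite := by
  unfold Gam
  refine Set.Finite.union (Set.Finite.union ?_ ?_) ?_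
  · refine Set.Finite.subset (Set.finite_univ.image
      (fun c : {c : S.Op // S.arity c = 0} =>
        (TT f1 c (mcD A f1 c + pcD A f1 c), TT f1 c (mcD A f1 c)))) ?_
    rintro e ⟨c, _, rfl⟩
    exact ⟨c, trivial, rfl⟩
  · refine Set.Finite.subset (Set.finite_univ.image
      (fun p : {c : S.Op // S.arity c = 0} × {c : S.Op // S.arity c = 0} =>
        (TT f1 p.1 (acdD A f1 p.1 p.2), TT f1 p.2 (bcdD A f1 p.1 p.2)))) ?_
    rintro e ⟨c, d, _, _, _, rfl⟩
    exact ⟨(c, d), trivial, rfl⟩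
  · refine Set.Finite.subset ((Set.Finite.prod
      (Set.finite_univ (α := {c : S.Op // S.arity c = 0} × {c : S.Op // S.arity c = 0}))
      ((Set.finite_Iic N).prod (Set.finite_Iic N))).image
      (fun x : ({c : S.Op // S.arity c = 0} × {c : S.Op // S.arity c = 0}) × ℕ × ℕ =>
        (TT f1 x.1.1 x.2.1, TT f1 x.1.2 x.2.2))) ?_
    rintro e ⟨c, d, i, j, hi, hj, _, rfl⟩
    exact ⟨((c, d), (i, j)), ⟨trivial, hi, hj⟩, rfl⟩

/-- Embed ground terms into terms with variables. -/
def tmToV : Tm S → TmV S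
  | Tm.node f a => TmV.node f (fun i => tmToV (a i))

lemma substG_tmToV (ρ : ℕ → Tm S) (t : Tm S) : (tmToV t).substG ρ = t := by
  induction t with
  | node f a ih =>
    show TmV.substG ρ (TmV.node f fun i => tmToV (a i)) = Tm.node f a
    unfold TmV.substG
    exact congrArg (Tm.node f) (funext fun i => ih i)

end Stmt19Aux


/-- If `Σ` consists of a single unary function symbol together with
finitely many constants, then every algebra over `Σ` generated by its constants is
initial, i.e., isomorphic to `F_Γ` for some finite set `Γ` of (possibly non-ground)
equations. -/
theorem stmt19 (S : Sig) [Fintype S.Op]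
    (h01 : ∀ f : S.Op, S.arity f = 0 ∨ S.arity f = 1)
    (hone : ∃! f : S.Op, S.arity f = 1)
    (hc : ∃ c : S.Op, S.arity c = 0)
    (A : Alg S) (hA : GeneratedAlg A) :
    ∃ Γ : Set (TmV S × TmV S), Γ.Finite ∧ AlgIso A (FGamma (GroundInstances Γ)) := by
  classical
  obtain ⟨f1, hf1, huniq⟩ := hone
  haveI : Fintype {c : S.Op // S.arity c = 0} := Fintype.ofFinite _
  set N := (Finset.univ : Finset {c : S.Op // S.arity c = 0}).sup
      (fun c => mcD A f1 c + pcD A f1 c) with hNdef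
  have hN : ∀ c, mcD A f1 c + pcD A f1 c ≤ N := fun c => by
    rw [hNdef]
    exact Finset.le_sup (f := fun c => mcD A f1 c + pcD A f1 c) (Finset.mem_univ c)
  set Γ₀ := Gam A f1 N with hΓ₀def
  -- soundness
  have sound : ∀ p q : Tm S, Thm Γ₀ p q → Tm.eval A p = Tm.eval A q := by
    intro p q h
    induction h with
    | ax hmem =>
      rcases hmem with (⟨c, hc, he⟩ | ⟨c, d, _, _, hr, he⟩) | ⟨c, d, i, j, _, _, hE, he⟩
      · injection he with h1 h2; rw [h1, h2]; exact (perD A f1 c hc).2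
      · injection he with h1 h2; rw [h1, h2]; exact abcd_spec A f1 c d hr
      · injection he with h1 h2; rw [h1, h2]; exact hE
    | refl t => rfl
    | symm _ ih => exact ih.symm
    | trans _ _ ih1 ih2 => exact ih1.trans ih2
    | congr _ ih =>
      rw [eval_node, eval_node]
      exact congrArg _ (funext fun i => ih i)
  -- iterated congruence
  have congrIter : ∀ p q : Tm S, Thm Γ₀ p q → ∀ r, Thm Γ₀ (iterF f1 p r) (iterF f1 q r) := by
    intro p q h r
    induction r with
    | zero => exact h
    | succ r ih => rw [iterF_succ, iterF_succ]; exact Thm.congr (fun _ => ih)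
  -- reduction of periodic orbits below the bound
  have reduce : ∀ c, PP A f1 c → ∀ a, ∃ a', a' < mcD A f1 c + pcD A f1 c ∧
      EE A f1 c a' = EE A f1 c a ∧ Thm Γ₀ (TT f1 c a) (TT f1 c a') := by
    intro c hc a
    induction a using Nat.strong_induction_on with
    | _ a ih =>
      by_cases hlt : a < mcD A f1 c + pcD A f1 c
      · exact ⟨a, hlt, rfl, Thm.refl _⟩
      · have hp := perD A f1 c hc
        have hr : a = (mcD A f1 c + pcD A f1 c) + (a - (mcD A f1 c + pcD A f1 c)) := by omega
        set r := a - (mcD A f1 c + pcD A f1 c) with hrdef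
        have hE1 : EE A f1 c ((mcD A f1 c + pcD A f1 c) + r) = EE A f1 c (mcD A f1 c + r) :=
          shiftE A f1 c c _ _ hp.2 r
        have hth : Thm Γ₀ (TT f1 c ((mcD A f1 c + pcD A f1 c) + r)) (TT f1 c (mcD A f1 c + r)) := by
          have hax : Thm Γ₀ (TT f1 c (mcD A f1 c + pcD A f1 c)) (TT f1 c (mcD A f1 c)) :=
            Thm.ax (Or.inl (Or.inl ⟨c, hc, rfl⟩))
          have := congrIter _ _ hax r
          rwa [← TT_add, ← TT_add] at this
        obtain ⟨a', h1, h2, h3⟩ := ih (mcD A f1 c + r) (by omega)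
        refine ⟨a', h1, ?_, ?_⟩
        · rw [h2, hr]; exact hE1.symm
        · rw [hr]; exact Thm.trans hth h3
  -- completeness
  have complete : ∀ c a d b, EE A f1 c a = EE A f1 d b →
      Thm Γ₀ (TT f1 c a) (TT f1 d b) := by
    intro c a d b hE
    by_cases hcP : PP A f1 c
    · have hdP : PP A f1 d := crossP A f1 c d a b hE hcP
      obtain ⟨a', ha1, ha2, ha3⟩ := reduce c hcP a
      obtain ⟨b', hb1, hb2, hb3⟩ := reduce d hdP b
      have hax : Thm Γ₀ (TT f1 c a') (TT f1 d b') :=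
        Thm.ax (Or.inr ⟨c, d, a', b', by have := hN c; omega, by have := hN d; omega,
          by rw [ha2, hb2]; exact hE, rfl⟩)
      exact Thm.trans ha3 (Thm.trans hax (Thm.symm hb3))
    · have hdP : ¬ PP A f1 d := fun hd => hcP (crossP A f1 d c b a hE.symm hd)
      have hrel : RelD A f1 c d := ⟨a, b, hE⟩
      have hmin : acdD A f1 c d ≤ a := acd_min A f1 c d hrel a ⟨b, hE⟩
      have h0 : EE A f1 c (acdD A f1 c d) = EE A f1 d (bcdD A f1 c d) := abcd_spec A f1 c d hrel
      have hdiff : a + bcdD A f1 c d = acdD A f1 c d + b := diagD A f1 c d a b _ _ hcP hE h0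
      have ha : a = acdD A f1 c d + (a - acdD A f1 c d) := by omega
      have hb : b = bcdD A f1 c d + (a - acdD A f1 c d) := by omega
      have hax : Thm Γ₀ (TT f1 c (acdD A f1 c d)) (TT f1 d (bcdD A f1 c d)) :=
        Thm.ax (Or.inl (Or.inr ⟨c, d, hcP, hdP, hrel, rfl⟩))
      have := congrIter _ _ hax (a - acdD A f1 c d)
      rw [← TT_add, ← TT_add] at this
      rw [ha, hb]
      exact this
  -- the key equivalence
  have key : ∀ p q : Tm S, Thm Γ₀ p q ↔ Tm.eval A p = Tm.eval A q := by
    intro p q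
    refine ⟨sound p q, fun h => ?_⟩
    obtain ⟨n, c, hc0, rfl⟩ := encodeTm h01 f1 (fun g hg => huniq g hg) p
    obtain ⟨m, d, hd0, rfl⟩ := encodeTm h01 f1 (fun g hg => huniq g hg) q
    exact complete ⟨c, hc0⟩ n ⟨d, hd0⟩ m h
  -- the set of equations with variables
  refine ⟨(fun e : Tm S × Tm S => (tmToV e.1, tmToV e.2)) '' Γ₀,
    (gam_finite A f1 N).image _, ?_⟩
  have hGI : GroundInstances ((fun e : Tm S × Tm S => (tmToV e.1, tmToV e.2)) '' Γ₀) = Γ₀ := by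
    ext pq
    constructor
    · rintro ⟨e, ⟨e0, he0, rfl⟩, ρ, h1, h2⟩
      have hpq : pq = e0 := by
        have hh1 : pq.1 = e0.1 := by rw [h1]; exact substG_tmToV ρ e0.1
        have hh2 : pq.2 = e0.2 := by rw [h2]; exact substG_tmToV ρ e0.2
        exact Prod.ext hh1 hh2
      rwa [hpq]
    · intro hpq
      exact ⟨(tmToV pq.1, tmToV pq.2), ⟨pq, hpq, rfl⟩, fun _ => pq.1,
        (substG_tmToV _ _).symm, (substG_tmToV _ _).symm⟩
  rw [hGI]
  -- the isomorphism
  have hmap : ∀ (f : S.Op) (a : Fin (S.arity f) → A.carrier),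
      Quotient.mk (thmSetoid Γ₀) (hA (A.op f a)).choose =
      (FGamma Γ₀).op f (fun i => Quotient.mk (thmSetoid Γ₀) (hA (a i)).choose) := by
    intro f a
    apply Quotient.sound
    show Thm Γ₀ _ _
    rw [key]
    have h1 : Tm.eval A (hA (A.op f a)).choose = A.op f a := (hA _).choose_spec
    have h2 : ∀ i, Tm.eval A ((Quotient.mk (thmSetoid Γ₀) (hA (a i)).choose).out) = a i := by
      intro i
      have hex := Quotient.exact (Quotient.out_eq (Quotient.mk (thmSetoid Γ₀) (hA (a i)).choose))
      rw [sound _ _ hex]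
      exact (hA (a i)).choose_spec
    rw [h1, eval_node]
    exact congrArg _ (funext fun i => (h2 i).symm)
  refine ⟨⟨fun x => Quotient.mk (thmSetoid Γ₀) (hA x).choose, hmap⟩, ?_, ?_⟩
  · intro x y hxy
    have := Quotient.exact hxy
    have := sound _ _ this
    rw [(hA x).choose_spec, (hA y).choose_spec] at this
    exact this
  · intro q
    induction q using Quotient.ind with
    | _ t =>
      refine ⟨Tm.eval A t, Quotient.sound ?_⟩
      show Thm Γ₀ _ _
      rw [key]
      exact (hA _).choose_spec


end AFA
end
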